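/- For α ∈ (0,1), T > 0, m, k ∈ ℕ₀ with 0 ≤ k < 2^m, and t ∈ (0,T): I^α_{T−} e_{m,k}(t) = e_{m,k}(T) · (T−t)^α / Γ(1+α) − I^{1+α}_{T−} H_{m,k}(t). -/

import Mathlib

open MeasureTheory Set

/-- The Haar function `H_{m,k}`. -/
noncomputable def Haar (m k : ℕ) (s : ℝ) : ℝ :=
  if s ∈ Set.Ioc ((k : ℝ) / 2 ^ m) (((k : ℝ) + 0.5) / 2 ^ m) then (2 : ℝ) ^ ((m : ℝ) / 2)
  else if s ∈ Set.Ioc (((k : ℝ) + 0.5) / 2 ^ m) (((k : ℝ) + 1) / 2 ^ m) then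
    -(2 : ℝ) ^ ((m : ℝ) / 2)
  else 0

/-- The Faber–Schauder function `e_{m,k}`, as the primitive of the Haar function. -/
noncomputable def FS (m k : ℕ) (t : ℝ) : ℝ := ∫ s in (0 : ℝ)..t, Haar m k s

/-- The right-sided Riemann–Liouville fractional integral of order `α` on `(t,T)`. -/
noncomputable def Iright (α : ℝ) (T : ℝ) (f : ℝ → ℝ) (t : ℝ) : ℝ :=
  (Real.Gamma α)⁻¹ * ∫ u in t..T, (u - t) ^ (α - 1) * f u

/-- Right-continuous version of the Haar function. -/
noncomputable def HaarR (m k : ℕ) (s : ℝ) : ℝ :=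
  if s ∈ Set.Ico ((k : ℝ) / 2 ^ m) (((k : ℝ) + 0.5) / 2 ^ m) then (2 : ℝ) ^ ((m : ℝ) / 2)
  else if s ∈ Set.Ico (((k : ℝ) + 0.5) / 2 ^ m) (((k : ℝ) + 1) / 2 ^ m) then
    -(2 : ℝ) ^ ((m : ℝ) / 2)
  else 0

lemma measurable_Haar (m k : ℕ) : Measurable (Haar m k) := by
  unfold Haar
  exact Measurable.ite (measurableSet_Ioc.preimage measurable_id) measurable_const
    (Measurable.ite (measurableSet_Ioc.preimage measurable_id) measurable_const measurable_const)

lemma measurable_HaarR (m k : ℕ) : Measurable (HaarR m k) := by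
  unfold HaarR
  exact Measurable.ite (measurableSet_Ico.preimage measurable_id) measurable_const
    (Measurable.ite (measurableSet_Ico.preimage measurable_id) measurable_const measurable_const)

lemma abs_Haar_le (m k : ℕ) (s : ℝ) : ‖Haar m k s‖ ≤ (2 : ℝ) ^ ((m : ℝ) / 2) := by
  have h : (0:ℝ) ≤ (2 : ℝ) ^ ((m : ℝ) / 2) := (Real.rpow_pos_of_pos two_pos _).le
  unfold Haar; split_ifs <;> simp [abs_of_nonneg h, h]

lemma abs_HaarR_le (m k : ℕ) (s : ℝ) : ‖HaarR m k s‖ ≤ (2 : ℝ) ^ ((m : ℝ) / 2) := by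
  have h : (0:ℝ) ≤ (2 : ℝ) ^ ((m : ℝ) / 2) := (Real.rpow_pos_of_pos two_pos _).le
  unfold HaarR; split_ifs <;> simp [abs_of_nonneg h, h]

lemma intervalIntegrable_Haar (m k : ℕ) (a b : ℝ) :
    IntervalIntegrable (Haar m k) volume a b :=
  intervalIntegrable_const.mono_fun'
    ((measurable_Haar m k).aestronglyMeasurable)
    (Filter.Eventually.of_forall fun s => abs_Haar_le m k s)

lemma intervalIntegrable_HaarR (m k : ℕ) (a b : ℝ) :
    IntervalIntegrable (HaarR m k) volume a b :=
  intervalIntegrable_const.mono_fun'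
    ((measurable_HaarR m k).aestronglyMeasurable)
    (Filter.Eventually.of_forall fun s => abs_HaarR_le m k s)

lemma continuous_FS (m k : ℕ) : Continuous (FS m k) :=
  intervalIntegral.continuous_primitive (intervalIntegrable_Haar m k) 0

lemma Haar_ae_eq_HaarR (m k : ℕ) :
    ∀ᵐ s : ℝ, Haar m k s = HaarR m k s := by
  set A := (k : ℝ) / 2 ^ m
  set B := ((k : ℝ) + 0.5) / 2 ^ m
  set C := ((k : ℝ) + 1) / 2 ^ m
  have hm : volume ({A, B, C} : Set ℝ) = 0 :=
    (Set.Finite.insert A ((Set.finite_singleton C).insert B)).measure_zero volume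
  filter_upwards [measure_eq_zero_iff_ae_notMem.1 hm] with s hs
  simp only [Set.mem_insert_iff, Set.mem_singleton_iff, not_or] at hs
  obtain ⟨hA, hB, hC⟩ := hs
  have e1 : (A < s ∧ s ≤ B) ↔ (A ≤ s ∧ s < B) :=
    ⟨fun ⟨h1, h2⟩ => ⟨h1.le, lt_of_le_of_ne h2 hB⟩,
     fun ⟨h1, h2⟩ => ⟨lt_of_le_of_ne h1 (Ne.symm hA), h2.le⟩⟩
  have e2 : (B < s ∧ s ≤ C) ↔ (B ≤ s ∧ s < C) :=
    ⟨fun ⟨h1, h2⟩ => ⟨h1.le, lt_of_le_of_ne h2 hC⟩,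
     fun ⟨h1, h2⟩ => ⟨lt_of_le_of_ne h1 (Ne.symm hB), h2.le⟩⟩
  simp only [A, B, C] at e1 e2
  simp only [Haar, HaarR, Set.mem_Ioc, Set.mem_Ico, e1, e2]

lemma Haar_locally_const_right (m k : ℕ) (x : ℝ) :
    ∃ y, x < y ∧ ∀ u ∈ Set.Ioc x y, Haar m k u = HaarR m k x := by
  have h2m : (0:ℝ) < 2 ^ m := by positivity
  have hAB : (k : ℝ) / 2 ^ m < ((k : ℝ) + 0.5) / 2 ^ m := by
    rw [div_lt_div_iff₀ h2m h2m]; nlinarith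
  have hBC : ((k : ℝ) + 0.5) / 2 ^ m < ((k : ℝ) + 1) / 2 ^ m := by
    rw [div_lt_div_iff₀ h2m h2m]; nlinarith
  rcases lt_or_ge x ((k : ℝ) / 2 ^ m) with h1 | h1
  · refine ⟨(k : ℝ) / 2 ^ m, h1, fun u hu => ?_⟩
    obtain ⟨hxu, huA⟩ := hu
    simp only [Haar, HaarR, Set.mem_Ioc, Set.mem_Ico]
    rw [if_neg (by rintro ⟨p, q⟩; linarith),
        if_neg (by rintro ⟨p, q⟩; linarith),
        if_neg (by rintro ⟨p, q⟩; linarith),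
        if_neg (by rintro ⟨p, q⟩; linarith)]
  rcases lt_or_ge x (((k : ℝ) + 0.5) / 2 ^ m) with h2 | h2
  · refine ⟨((k : ℝ) + 0.5) / 2 ^ m, h2, fun u hu => ?_⟩
    obtain ⟨hxu, huB⟩ := hu
    simp only [Haar, HaarR, Set.mem_Ioc, Set.mem_Ico]
    rw [if_pos ⟨by linarith, huB⟩, if_pos ⟨h1, h2⟩]
  rcases lt_or_ge x (((k : ℝ) + 1) / 2 ^ m) with h3 | h3
  · refine ⟨((k : ℝ) + 1) / 2 ^ m, h3, fun u hu => ?_⟩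
    obtain ⟨hxu, huC⟩ := hu
    simp only [Haar, HaarR, Set.mem_Ioc, Set.mem_Ico]
    rw [if_neg (by rintro ⟨p, q⟩; linarith),
        if_pos ⟨by linarith, huC⟩,
        if_neg (by rintro ⟨p, q⟩; linarith),
        if_pos ⟨h2, h3⟩]
  · refine ⟨x + 1, by linarith, fun u hu => ?_⟩
    obtain ⟨hxu, _⟩ := hu
    simp only [Haar, HaarR, Set.mem_Ioc, Set.mem_Ico]
    rw [if_neg (by rintro ⟨p, q⟩; linarith),
        if_neg (by rintro ⟨p, q⟩; linarith),
        if_neg (by rintro ⟨p, q⟩; linarith),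
        if_neg (by rintro ⟨p, q⟩; linarith)]

lemma hasDerivWithinAt_FS (m k : ℕ) (x : ℝ) :
    HasDerivWithinAt (FS m k) (HaarR m k x) (Set.Ioi x) x := by
  obtain ⟨y, hxy, hloc⟩ := Haar_locally_const_right m k x
  have hg : HasDerivAt (fun u => FS m k x + HaarR m k x * (u - x)) (HaarR m k x) x := by
    simpa using (((hasDerivAt_id x).sub_const x).const_mul (HaarR m k x)).const_add (FS m k x)
  refine hg.hasDerivWithinAt.congr_of_eventuallyEq ?_ (by simp)
  filter_upwards [Ioc_mem_nhdsGT_of_mem ⟨le_refl x, hxy⟩] with u hu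
  have hint : FS m k u = FS m k x + ∫ s in x..u, Haar m k s := by
    rw [FS, FS, intervalIntegral.integral_add_adjacent_intervals
      (intervalIntegrable_Haar m k 0 x) (intervalIntegrable_Haar m k x u)]
  rw [hint, intervalIntegral.integral_of_le hu.1.le]
  have : ∫ s in Set.Ioc x u, Haar m k s = ∫ _ in Set.Ioc x u, HaarR m k x :=
    setIntegral_congr_fun measurableSet_Ioc fun s hs => hloc s ⟨hs.1, hs.2.trans hu.2⟩
  rw [this, setIntegral_const, Real.volume_real_Ioc_of_le (by linarith [hu.1.le] : x ≤ u), smul_eq_mul, mul_comm]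

theorem fractional_integral_FS_right (α T : ℝ) (hα : α ∈ Set.Ioo (0 : ℝ) 1) (hT : 0 < T)
    (m k : ℕ) (hk : k < 2 ^ m) (t : ℝ) (ht : t ∈ Set.Ioo (0 : ℝ) T) :
    Iright α T (FS m k) t =
      FS m k T * (T - t) ^ α / Real.Gamma (1 + α) - Iright (1 + α) T (Haar m k) t := by
  obtain ⟨hα0, hα1⟩ := hα
  obtain ⟨ht0, htT⟩ := ht
  have hαne : α ≠ 0 := ne_of_gt hα0
  have hpow_cont : Continuous fun u : ℝ => (u - t) ^ α :=
    (continuous_sub_right t).rpow_const fun u => Or.inr hα0.le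
  have I1 : IntervalIntegrable (fun x : ℝ => (x - t) ^ (α - 1)) volume t T := by
    have := (intervalIntegral.intervalIntegrable_rpow' (by linarith : (-1:ℝ) < α - 1)
      (a := 0) (b := T - t)).comp_sub_right t
    simpa using this
  have I1' : IntervalIntegrable (fun x => (x - t) ^ (α - 1) * (α * FS m k x)) volume t T :=
    I1.mul_continuousOn ((continuous_const.mul (continuous_FS m k)).continuousOn)
  have I2 : IntervalIntegrable (fun x => (x - t) ^ α * HaarR m k x) volume t T :=
    (intervalIntegrable_HaarR m k t T).continuousOn_mul hpow_cont.continuousOn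
  have hderiv : ∀ x ∈ Set.Ioo t T,
      HasDerivWithinAt (fun u => (u - t) ^ α * FS m k u)
        ((x - t) ^ (α - 1) * (α * FS m k x) + (x - t) ^ α * HaarR m k x) (Set.Ioi x) x := by
    intro x hx
    have hxt : (0:ℝ) < x - t := by linarith [hx.1]
    have h1 : HasDerivAt (fun u : ℝ => (u - t) ^ α) (α * (x - t) ^ (α - 1)) x := by
      have := (Real.hasDerivAt_rpow_const (x := x - t) (p := α)
        (Or.inl hxt.ne')).comp x ((hasDerivAt_id x).sub_const t)
      rw [mul_one] at this; exact this
    have h := h1.hasDerivWithinAt.mul (hasDerivWithinAt_FS m k x)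
    exact h.congr_deriv (by ring)
  have hcont : ContinuousOn (fun u => (u - t) ^ α * FS m k u) (Set.Icc t T) :=
    (hpow_cont.mul (continuous_FS m k)).continuousOn
  have hFTC := intervalIntegral.integral_eq_sub_of_hasDeriv_right_of_le htT.le hcont hderiv
    (I1'.add I2)
  rw [intervalIntegral.integral_add I1' I2] at hFTC
  have e0 : ((t:ℝ) - t) ^ α = 0 := by rw [sub_self, Real.zero_rpow hαne]
  rw [e0, zero_mul, sub_zero] at hFTC
  have eJ : (∫ x in t..T, (x - t) ^ (α - 1) * (α * FS m k x))
      = α * ∫ x in t..T, (x - t) ^ (α - 1) * FS m k x := by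
    rw [← intervalIntegral.integral_const_mul]
    congr 1; funext x; ring
  have eK : (∫ x in t..T, (x - t) ^ α * HaarR m k x)
      = ∫ x in t..T, (x - t) ^ α * Haar m k x := by
    apply intervalIntegral.integral_congr_ae
    filter_upwards [Haar_ae_eq_HaarR m k] with s hs _
    rw [hs]
  rw [eJ, eK] at hFTC
  have hΓ : Real.Gamma α ≠ 0 := (Real.Gamma_pos_of_pos hα0).ne'
  have hΓ1 : Real.Gamma (1 + α) = α * Real.Gamma α := by
    rw [add_comm, Real.Gamma_add_one hαne]
  simp only [Iright, hΓ1, show (1 + α - 1) = α by ring]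
  set J := ∫ u in t..T, (u - t) ^ (α - 1) * FS m k u with hJ
  set K := ∫ u in t..T, (u - t) ^ α * Haar m k u with hK
  field_simp
  linear_combination hFTC
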